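/- Let B and C be finite types with |B| ≥ 2 and |C| ≥ 5, and let R[B;C] be the subgroup of Aut((B × C)^ℤ) generated by the partial shift σ₂ together with the symbol permutations π̄ where π ranges over the permutations of B × C satisfying (π(b,c)).1 = b for all (b,c). Then R[B;C] does not satisfy the Tits alternative: there is no injective group homomorphism from the free group on two generators into R[B;C], and R[B;C] has no solvable subgroup of finite index. -/

import Mathlib

open Function

/-- The shift map on `ℤ → A`. -/
def shiftMap (A : Type*) : (ℤ → A) → (ℤ → A) := fun x i => x (i + 1)

/-- The shift map as a permutation of `ℤ → A`. -/
def shiftPerm (A : Type*) : Equiv.Perm (ℤ → A) where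
  toFun := shiftMap A
  invFun x i := x (i - 1)
  left_inv x := funext fun i => by simp [shiftMap]
  right_inv x := funext fun i => by simp [shiftMap]

/-- Finite types carry the discrete topology. -/
instance fintypeDiscreteTopology (A : Type*) [Fintype A] : TopologicalSpace A := ⊥

/-- The automorphism group of the full shift `A^ℤ`: shift-commuting self-homeomorphisms of
`ℤ → A`, as a subgroup of the permutation group of `ℤ → A`. -/
def FullShiftAut (A : Type*) [Fintype A] : Subgroup (Equiv.Perm (ℤ → A)) where
  carrier := { f | Continuous ⇑f ∧ Continuous ⇑f.symm ∧
      ∀ x, f (shiftMap A x) = shiftMap A (f x) }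
  one_mem' := ⟨continuous_id, continuous_id, fun _ => rfl⟩
  mul_mem' := by
    rintro f g ⟨hf1, hf2, hf3⟩ ⟨hg1, hg2, hg3⟩
    refine ⟨?_, ?_, fun x => ?_⟩
    · exact hf1.comp hg1
    · exact hg2.comp hf2
    · show f (g (shiftMap A x)) = shiftMap A (f (g x))
      rw [hg3, hf3]
  inv_mem' := by
    rintro f ⟨hf1, hf2, hf3⟩
    refine ⟨hf2, hf1, fun x => ?_⟩
    apply f.injective
    rw [show ∀ y, f (f⁻¹ y) = y from fun y => f.apply_symm_apply y, hf3,
      show ∀ y, f (f⁻¹ y) = y from fun y => f.apply_symm_apply y]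

/-- The symbol permutation determined by a permutation of the alphabet. -/
def symbolPerm {A : Type*} (π : Equiv.Perm A) : Equiv.Perm (ℤ → A) :=
  Equiv.piCongrRight fun _ => π

/-- The partial shift on the first track. -/
def partialShift₁ (B C : Type*) : Equiv.Perm (ℤ → B × C) where
  toFun x i := ((x (i + 1)).1, (x i).2)
  invFun x i := ((x (i - 1)).1, (x i).2)
  left_inv x := funext fun i => by simp
  right_inv x := funext fun i => by simp

/-- The partial shift on the second track. -/
def partialShift₂ (B C : Type*) : Equiv.Perm (ℤ → B × C) where
  toFun x i := ((x i).1, (x (i + 1)).2)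
  invFun x i := ((x i).1, (x (i - 1)).2)
  left_inv x := funext fun i => by simp
  right_inv x := funext fun i => by simp

/-- `PAut[B;C]`: the subgroup of the automorphism group of `(B × C)^ℤ` generated by the two
partial shifts and all symbol permutations. -/
def PAut (B C : Type*) : Subgroup (Equiv.Perm (ℤ → B × C)) :=
  Subgroup.closure
    ({partialShift₁ B C, partialShift₂ B C} ∪ Set.range (symbolPerm (A := B × C)))

/-- `R[B;C]`: the subgroup of `Aut((B × C)^ℤ)` generated by the partial shift on the second
track together with symbol permutations fixing the first track. -/
def RGrp (B C : Type*) : Subgroup (Equiv.Perm (ℤ → B × C)) :=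
  Subgroup.closure
    ({partialShift₂ B C} ∪
      {f | ∃ π : Equiv.Perm (B × C), (∀ a : B × C, (π a).1 = a.1) ∧ f = symbolPerm π})

namespace Stmt18aux

variable {B C : Type*}

def cwFun (ρ : (ℤ → B) → Equiv.Perm C) : (ℤ → B × C) → (ℤ → B × C) :=
  fun x i => ((x i).1, ρ (fun j => (x (i + j)).1) ((x i).2))

lemma cwFun_comp (ρ ρ' : (ℤ → B) → Equiv.Perm C) (x : ℤ → B × C) :
    cwFun ρ (cwFun ρ' x) = cwFun (ρ * ρ') x := by
  funext i; simp [cwFun]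

def cw : ((ℤ → B) → Equiv.Perm C) →* Equiv.Perm (ℤ → B × C) where
  toFun ρ :=
    { toFun := cwFun ρ
      invFun := cwFun ρ⁻¹
      left_inv := fun x => by
        rw [cwFun_comp, inv_mul_cancel]; funext i; simp [cwFun]
      right_inv := fun x => by
        rw [cwFun_comp, mul_inv_cancel]; funext i; simp [cwFun] }
  map_one' := by
    ext x i
    · rfl
    · show (cwFun 1 x i).2 = ((1 : Equiv.Perm (ℤ → B × C)) x i).2
      simp [cwFun]
  map_mul' := fun ρ ρ' => by
    ext x i
    · rfl
    · show (cwFun (ρ * ρ') x i).2 = (cwFun ρ (cwFun ρ' x) i).2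
      rw [cwFun_comp]

lemma cw_apply (ρ : (ℤ → B) → Equiv.Perm C) (x : ℤ → B × C) (i : ℤ) :
    cw ρ x i = ((x i).1, ρ (fun j => (x (i + j)).1) ((x i).2)) := rfl

lemma ps2_zpow_apply (k : ℤ) (x : ℤ → B × C) (i : ℤ) :
    ((partialShift₂ B C ^ k) x) i = ((x i).1, (x (i + k)).2) := by
  induction k using Int.induction_on generalizing x i with
  | zero => simp
  | succ k ih =>
      rw [zpow_add_one, Equiv.Perm.mul_apply, ih]
      show ((partialShift₂ B C x i).1, ((partialShift₂ B C x) (i + k)).2) = _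
      show ((x i).1, (x (i + k + 1)).2) = _
      rw [add_assoc]
  | pred k ih =>
      rw [zpow_sub_one, Equiv.Perm.mul_apply, ih]
      show ((((partialShift₂ B C)⁻¹ x) i).1, (((partialShift₂ B C)⁻¹ x) (i + -k)).2) = _
      show ((x i).1, (x (i + -k - 1)).2) = _
      congr 2
      ring

lemma cw_conj (k : ℤ) (ρ : (ℤ → B) → Equiv.Perm C) :
    partialShift₂ B C ^ k * cw ρ * partialShift₂ B C ^ (-k)
      = cw (fun y => ρ (fun j => y (k + j))) := by
  apply Equiv.ext; intro x; funext i
  rw [Equiv.Perm.mul_apply, Equiv.Perm.mul_apply, ps2_zpow_apply, cw_apply, cw_apply]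
  have h1 : ∀ m : ℤ, ((partialShift₂ B C ^ (-k)) x) m = ((x m).1, (x (m + -k)).2) :=
    fun m => ps2_zpow_apply _ _ _
  simp only [h1]
  rw [cw_apply]
  have h2 : i + k + -k = i := by ring
  have h3 : ∀ j : ℤ, i + k + j = i + (k + j) := fun j => by ring
  simp only [h2, h3]

/-- locality of a cellwise rule -/
def IsLocal (ρ : (ℤ → B) → Equiv.Perm C) (a b : ℤ) : Prop :=
  ∀ y y' : ℤ → B, (∀ j, a ≤ j → j ≤ b → y j = y' j) → ρ y = ρ y'

/-- set of "local cellwise" automorphisms -/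
def Mset (B C : Type*) : Set (Equiv.Perm (ℤ → B × C)) :=
  {f | ∃ (ρ : (ℤ → B) → Equiv.Perm C) (a b : ℤ), IsLocal ρ a b ∧ f = cw ρ}

lemma one_mem_Mset : (1 : Equiv.Perm (ℤ → B × C)) ∈ Mset B C :=
  ⟨1, 0, 0, fun _ _ _ => rfl, (map_one cw).symm⟩

lemma mul_mem_Mset {f g : Equiv.Perm (ℤ → B × C)} (hf : f ∈ Mset B C) (hg : g ∈ Mset B C) :
    f * g ∈ Mset B C := by
  obtain ⟨ρ, a, b, hl, rfl⟩ := hf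
  obtain ⟨ρ', a', b', hl', rfl⟩ := hg
  refine ⟨ρ * ρ', min a a', max b b', fun y y' h => ?_, (map_mul cw ρ ρ').symm⟩
  have h1 : ρ y = ρ y' := hl y y' fun j hj hj' =>
    h j (le_trans (min_le_left _ _) hj) (le_trans hj' (le_max_left _ _))
  have h2 : ρ' y = ρ' y' := hl' y y' fun j hj hj' =>
    h j (le_trans (min_le_right _ _) hj) (le_trans hj' (le_max_right _ _))
  simp [h1, h2]

lemma inv_mem_Mset {f : Equiv.Perm (ℤ → B × C)} (hf : f ∈ Mset B C) : f⁻¹ ∈ Mset B C := by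
  obtain ⟨ρ, a, b, hl, rfl⟩ := hf
  exact ⟨ρ⁻¹, a, b, fun y y' h => by rw [Pi.inv_apply, Pi.inv_apply, hl y y' h],
    (map_inv cw ρ).symm⟩

lemma conj_mem_Mset (k : ℤ) {f : Equiv.Perm (ℤ → B × C)} (hf : f ∈ Mset B C) :
    partialShift₂ B C ^ k * f * partialShift₂ B C ^ (-k) ∈ Mset B C := by
  obtain ⟨ρ, a, b, hl, rfl⟩ := hf
  refine ⟨fun y => ρ (fun j => y (k + j)), a + k, b + k, fun y y' h => ?_, (cw_conj k ρ).symm ▸ rfl⟩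
  exact hl _ _ fun j hj hj' => h (k + j) (by omega) (by omega)

/-- decomposition predicate: `f = σ₂^k * (local cellwise)` -/
def D (f : Equiv.Perm (ℤ → B × C)) (k : ℤ) : Prop :=
  ∃ m ∈ Mset B C, f = partialShift₂ B C ^ k * m

lemma D_mul {f g : Equiv.Perm (ℤ → B × C)} {k j : ℤ} (hf : D f k) (hg : D g j) :
    D (f * g) (k + j) := by
  obtain ⟨m, hm, rfl⟩ := hf
  obtain ⟨m', hm', rfl⟩ := hg
  refine ⟨(partialShift₂ B C ^ (-j) * m * partialShift₂ B C ^ (-(-j))) * m',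
    mul_mem_Mset (conj_mem_Mset _ hm) hm', ?_⟩
  simp only [neg_neg]
  group

lemma D_one : D (1 : Equiv.Perm (ℤ → B × C)) 0 :=
  ⟨1, one_mem_Mset, by simp⟩

lemma D_inv {f : Equiv.Perm (ℤ → B × C)} {k : ℤ} (hf : D f k) : D f⁻¹ (-k) := by
  obtain ⟨m, hm, rfl⟩ := hf
  refine ⟨partialShift₂ B C ^ k * m⁻¹ * partialShift₂ B C ^ (-k),
    conj_mem_Mset _ (inv_mem_Mset hm), ?_⟩
  group

lemma D_zpow {f : Equiv.Perm (ℤ → B × C)} {k : ℤ} (hf : D f k) (t : ℤ) :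
    D (f ^ t) (t * k) := by
  induction t using Int.induction_on with
  | zero => simpa using D_one
  | succ t ih =>
      rw [zpow_add_one]
      have := D_mul ih hf
      have e : (↑t + 1) * k = ↑t * k + k := by ring
      rw [e]; exact this
  | pred t ih =>
      rw [zpow_sub_one]
      have := D_mul ih (D_inv hf)
      have e : (-↑t - 1) * k = -↑t * k + -k := by ring
      rw [e]; exact this

lemma D_unique [Nonempty B] {f : Equiv.Perm (ℤ → B × C)} {k j : ℤ}
    (hC2 : ∃ c0 c1 : C, c0 ≠ c1) (hf : D f k) (hg : D f j) : k = j := by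
  obtain ⟨c0, c1, hc⟩ := hC2
  obtain ⟨b0⟩ := ‹Nonempty B›
  obtain ⟨m, ⟨ρ, a, b, hl, rfl⟩, rfl⟩ := hf
  obtain ⟨m', ⟨ρ', a', b', hl', rfl⟩, hg⟩ := hg
  by_contra hkj
  have d := k - j
  -- apply both sides to config with constant first track, delta second track
  set z : ℤ → C := fun i => if i = 0 then c0 else c1 with hz
  set x : ℤ → B × C := fun i => (b0, z i) with hx
  have key : ∀ i : ℤ, ρ (fun _ => b0) (z (i + k)) = ρ' (fun _ => b0) (z (i + j)) := by
    intro i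
    have := congrFun (congrArg (fun (F : Equiv.Perm (ℤ → B × C)) => F x) hg) i
    simp only [Equiv.Perm.mul_apply] at this
    rw [ps2_zpow_apply, ps2_zpow_apply] at this
    rw [cw_apply, cw_apply] at this
    have e1 : (fun j' => (x (i + k + j')).1) = (fun _ => b0) := rfl
    have e2 : (fun j' => (x (i + j + j')).1) = (fun _ => b0) := rfl
    rw [e1, e2] at this
    exact congrArg Prod.snd this
  set τ := ρ (fun _ => b0)
  set τ' := ρ' (fun _ => b0)
  -- specialize
  have h1 := key (-j + (k - j))   -- τ (z (2(k-j))) = τ' (z (k-j))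
  have h2 := key (-j)             -- τ (z (k-j)) = τ' (z 0)
  have h3 := key (-k)             -- τ (z 0) = τ' (z (j-k))
  have hz0 : z 0 = c0 := by simp [hz]
  have hzd : z (k - j) = c1 := by simp [hz]; omega
  have hzd2 : z (-(k - j)) = c1 := by simp [hz]; omega
  have hzd3 : z (2 * (k - j)) = c1 := by simp [hz]; omega
  rw [show -j + (k - j) + k = 2 * (k - j) by ring, show -j + (k - j) + j = k - j by ring] at h1
  rw [show -j + k = k - j by ring, show -j + j = (0:ℤ) by ring] at h2
  rw [show -k + k = (0:ℤ) by ring, show -k + j = -(k - j) by ring] at h3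
  rw [hzd3, hzd] at h1
  rw [hzd, hz0] at h2
  rw [hz0, hzd2] at h3
  -- h1 : τ c1 = τ' c1, h2 : τ c1 = τ' c0, h3 : τ c0 = τ' c1
  have : τ' c0 = τ' c1 := by rw [← h2, ← h1]
  exact hc (τ'.injective this)

lemma pow_local {ρ : (ℤ → B) → Equiv.Perm C} {a b : ℤ} (hl : IsLocal ρ a b) (t : ℕ) :
    IsLocal (ρ ^ t) a b := fun y y' h => by
  rw [Pi.pow_apply, Pi.pow_apply, hl y y' h]

/-- every local cellwise automorphism has finite order -/
lemma Mset_finite_order [Finite B] [Finite C] {f : Equiv.Perm (ℤ → B × C)}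
    (hf : f ∈ Mset B C) : ∃ T : ℕ, 0 < T ∧ f ^ T = 1 := by
  obtain ⟨ρ, a, b, hl, rfl⟩ := hf
  by_cases hB : Nonempty B
  case neg =>
    -- B empty: then ℤ → B × C is subsingleton? no, empty... ℤ → B×C is empty→ perm group trivial? ℤ→B×C : functions; B×C empty so ℤ→B×C empty?? no: ℤ nonempty so ℤ→B×C empty. Perm of empty type is subsingleton.
    refine ⟨1, one_pos, ?_⟩
    have : IsEmpty (ℤ → B × C) := by
      rw [not_nonempty_iff] at hB
      exact ⟨fun x => hB.elim (x 0).1⟩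
    exact Subsingleton.elim _ _
  obtain ⟨b0⟩ := hB
  -- restriction to window
  classical
  set J := Set.Icc a b with hJ
  haveI : Finite J := Set.finite_Icc a b
  set ext : (J → B) → (ℤ → B) := fun u j => if h : j ∈ J then u ⟨j, h⟩ else b0 with hext
  have key : ∀ t : ℕ, ∀ y : ℤ → B, (ρ ^ t) y = (ρ ^ t) (ext (fun j => y j.1)) := by
    intro t y
    refine pow_local hl t _ _ fun j hj hj' => ?_
    have hjJ : j ∈ J := ⟨hj, hj'⟩
    simp [hext, hjJ]
  set e : ℕ → ((J → B) → Equiv.Perm C) := fun t => fun u => (ρ ^ t) (ext u) with he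
  haveI : Finite ((J → B) → Equiv.Perm C) := by
    haveI : Finite (Equiv.Perm C) := by infer_instance
    infer_instance
  obtain ⟨t, t', htt', hee⟩ := Finite.exists_ne_map_eq_of_infinite e
  wlog hlt : t < t' generalizing t t'
  · exact this t' t htt'.symm hee.symm (by omega)
  have hρ : ρ ^ t = ρ ^ t' := by
    funext y
    rw [key t y, key t' y]
    have := congrFun hee (fun j => y j.1)
    simpa [he] using this
  refine ⟨t' - t, by omega, ?_⟩
  have : cw ρ ^ t = cw ρ ^ t' := by
    rw [← map_pow, ← map_pow, hρ]
  have h2 : cw ρ ^ t * (cw ρ ^ (t' - t)) = cw ρ ^ t * 1 := by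
    rw [mul_one, ← pow_add]
    rw [show t + (t' - t) = t' by omega, this]
  exact mul_left_cancel h2

/-- the permutation of `C` induced at symbol `b` by a first-track-preserving permutation -/
def fstFiber (π : Equiv.Perm (B × C)) (hπ : ∀ a : B × C, (π a).1 = a.1) (b : B) :
    Equiv.Perm C where
  toFun c := (π (b, c)).2
  invFun c := (π.symm (b, c)).2
  left_inv c := by
    show (π.symm (b, (π (b, c)).2)).2 = c
    have h1 : ((b : B), (π (b, c)).2) = π (b, c) := by
      ext
      · exact (hπ (b, c)).symm
      · rfl
    rw [h1, Equiv.symm_apply_apply]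
  right_inv c := by
    show (π ((b : B), (π.symm (b, c)).2)).2 = c
    have h0 : (π.symm (b, c)).1 = b := by
      have h := hπ (π.symm (b, c))
      rw [Equiv.apply_symm_apply] at h
      exact h.symm
    have h1 : ((b : B), (π.symm (b, c)).2) = π.symm (b, c) := by
      ext
      · exact h0.symm
      · rfl
    rw [h1, Equiv.apply_symm_apply]

lemma symbolPerm_eq_cw (π : Equiv.Perm (B × C)) (hπ : ∀ a : B × C, (π a).1 = a.1) :
    symbolPerm π = cw (fun y => fstFiber π hπ (y 0)) := by
  apply Equiv.ext; intro x; funext i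
  rw [cw_apply]
  show π (x i) = _
  have : π (x i) = ((x i).1, (π ((x i).1, (x i).2)).2) := by
    ext
    · exact (hπ (x i)).symm ▸ rfl
    · rfl
  rw [this]
  simp [fstFiber]

lemma D_symbolPerm (π : Equiv.Perm (B × C)) (hπ : ∀ a : B × C, (π a).1 = a.1) :
    D (symbolPerm π) 0 := by
  refine ⟨symbolPerm π, ⟨fun y => fstFiber π hπ (y 0), 0, 0,
    fun y y' h => by simp only []; rw [h 0 le_rfl le_rfl], symbolPerm_eq_cw π hπ⟩, by simp⟩

lemma D_ps2 : D (partialShift₂ B C) 1 := ⟨1, one_mem_Mset, by simp⟩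

end Stmt18aux


namespace Stmt18aux

lemma exists_D {f : Equiv.Perm (ℤ → B × C)} (hf : f ∈ RGrp B C) : ∃ k, D f k := by
  induction hf using Subgroup.closure_induction with
  | mem x hx =>
      rcases hx with hx | ⟨π, hπ, rfl⟩
      · rw [Set.mem_singleton_iff] at hx
        exact ⟨1, hx ▸ D_ps2⟩
      · exact ⟨0, D_symbolPerm π hπ⟩
  | one => exact ⟨0, D_one⟩
  | mul x y hx hy ihx ihy =>
      obtain ⟨k, hk⟩ := ihx
      obtain ⟨j, hj⟩ := ihy
      exact ⟨k + j, D_mul hk hj⟩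
  | inv x hx ihx =>
      obtain ⟨k, hk⟩ := ihx
      exact ⟨-k, D_inv hk⟩

/-- Part 1 -/
theorem part1 {B C : Type} [Fintype B] [Fintype C]
    (hB : 2 ≤ Fintype.card B) (hC : 5 ≤ Fintype.card C) :
    ¬ ∃ φ : FreeGroup (Fin 2) →* ↥(RGrp B C), Function.Injective φ := by
  rintro ⟨φ, hφ⟩
  haveI : Nonempty B := Fintype.card_pos_iff.mp (by omega)
  have hC2 : ∃ c0 c1 : C, c0 ≠ c1 := by
    obtain ⟨c0, c1, h⟩ := Fintype.exists_pair_of_one_lt_card (by omega : 1 < Fintype.card C)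
    exact ⟨c0, c1, h⟩
  -- torsion elements of the free group via λ-homs
  set lam : Fin 2 → (FreeGroup (Fin 2) →* Multiplicative ℤ) := fun i0 =>
    FreeGroup.lift (fun i => Multiplicative.ofAdd (if i = i0 then (1 : ℤ) else 0)) with hlam
  have lam_count : ∀ (i0 : Fin 2) (w : FreeGroup (Fin 2)) (T : ℕ), w ^ T = 1 → T ≠ 0 →
      Multiplicative.toAdd (lam i0 w) = 0 := by
    intro i0 w T hw hT
    have := congrArg (lam i0) hw
    rw [map_pow, map_one] at this
    have h2 := congrArg Multiplicative.toAdd this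
    rw [toAdd_pow] at h2
    simp only [toAdd_one] at h2
    have : (T : ℤ) * Multiplicative.toAdd (lam i0 w) = 0 := by
      rw [← h2]; simp [nsmul_eq_mul]
    rcases mul_eq_zero.mp this with h | h
    · exact absurd (by exact_mod_cast h) hT
    · exact h
  set e1 : FreeGroup (Fin 2) := FreeGroup.of 0 with he1
  set e2 : FreeGroup (Fin 2) := FreeGroup.of 1 with he2
  obtain ⟨a, ha⟩ := exists_D (φ e1).2
  obtain ⟨b, hb⟩ := exists_D (φ e2).2
  -- w has D-value 0
  set w : FreeGroup (Fin 2) := e1 ^ b * e2 ^ (-a) with hw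
  have hDw : D ((φ w : ↥(RGrp B C)) : Equiv.Perm (ℤ → B × C)) 0 := by
    have : ((φ w : ↥(RGrp B C)) : Equiv.Perm (ℤ → B × C))
        = ((φ e1 : ↥(RGrp B C)) : Equiv.Perm (ℤ → B × C)) ^ b
          * ((φ e2 : ↥(RGrp B C)) : Equiv.Perm (ℤ → B × C)) ^ (-a) := by
      rw [hw, map_mul, map_zpow, map_zpow]
      rfl
    rw [this]
    have := D_mul (D_zpow ha b) (D_zpow hb (-a))
    rwa [show b * a + -a * b = 0 by ring] at this
  -- φ w has finite order
  have hMw : ((φ w : ↥(RGrp B C)) : Equiv.Perm (ℤ → B × C)) ∈ Mset B C := by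
    obtain ⟨m, hm, hme⟩ := hDw
    rw [zpow_zero, one_mul] at hme
    exact hme ▸ hm
  obtain ⟨T, hT, hTe⟩ := Mset_finite_order hMw
  have hwT : w ^ T = 1 := by
    apply hφ
    rw [map_pow, map_one]
    apply Subtype.ext
    push_cast
    exact hTe
  -- conclude a = b = 0
  have hb0 : b = 0 := by
    have := lam_count 0 w T hwT (by omega)
    rw [hw, map_mul, map_zpow, map_zpow] at this
    simp only [hlam] at this
    rw [FreeGroup.lift_apply_of, FreeGroup.lift_apply_of] at this
    simp at this
    exact this
  have ha0 : a = 0 := by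
    have := lam_count 1 w T hwT (by omega)
    rw [hw, map_mul, map_zpow, map_zpow] at this
    simp only [hlam] at this
    rw [FreeGroup.lift_apply_of, FreeGroup.lift_apply_of] at this
    simp at this
    exact this
  -- then φ e1 itself has finite order, contradiction
  rw [ha0] at ha
  have hMe1 : ((φ e1 : ↥(RGrp B C)) : Equiv.Perm (ℤ → B × C)) ∈ Mset B C := by
    obtain ⟨m, hm, hme⟩ := ha
    rw [zpow_zero, one_mul] at hme
    exact hme ▸ hm
  obtain ⟨T', hT', hTe'⟩ := Mset_finite_order hMe1
  have he1T : e1 ^ T' = 1 := by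
    apply hφ
    rw [map_pow, map_one]
    apply Subtype.ext
    push_cast
    exact hTe'
  have := lam_count 0 e1 T' he1T (by omega)
  rw [he1] at this
  simp only [hlam] at this
  rw [FreeGroup.lift_apply_of] at this
  simp at this

end Stmt18aux

namespace Stmt18aux
open scoped Classical
open scoped commutatorElement

variable {B C : Type*}

noncomputable def dd (n : ℕ) (q : Fin (n + 1) → B) (v : Equiv.Perm C) :
    (ℤ → B) → Equiv.Perm C :=
  fun y => if ∀ j : Fin (n + 1), y (j : ℤ) = q j then v else 1

lemma dd_one (n : ℕ) (q : Fin (n + 1) → B) : dd n q (1 : Equiv.Perm C) = 1 := by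
  funext y; simp [dd]

lemma dd_mul (n : ℕ) (q : Fin (n + 1) → B) (v w : Equiv.Perm C) :
    dd n q (v * w) = dd n q v * dd n q w := by
  funext y
  by_cases h : ∀ j : Fin (n + 1), y (j : ℤ) = q j <;> simp [dd, h]

lemma dd_inv (n : ℕ) (q : Fin (n + 1) → B) (v : Equiv.Perm C) :
    dd n q v⁻¹ = (dd n q v)⁻¹ := by
  funext y
  by_cases h : ∀ j : Fin (n + 1), y (j : ℤ) = q j <;> simp [dd, h]

/-- symbol permutation determined by a track-fixing family -/
def trackPerm (ρ : B → Equiv.Perm C) : Equiv.Perm (B × C) where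
  toFun p := (p.1, ρ p.1 p.2)
  invFun p := (p.1, (ρ p.1)⁻¹ p.2)
  left_inv p := by simp
  right_inv p := by simp

lemma cw_single_mem (ρ : B → Equiv.Perm C) : cw (fun y => ρ (y 0)) ∈ RGrp B C := by
  have he : cw (fun y : ℤ → B => ρ (y 0)) = symbolPerm (trackPerm ρ) := by
    apply Equiv.ext; intro x; funext i
    rw [cw_apply]
    show _ = trackPerm ρ (x i)
    show ((x i).1, ρ ((x (i + 0)).1) ((x i).2)) = ((x i).1, ρ (x i).1 (x i).2)
    rw [add_zero]
  rw [he]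
  exact Subgroup.subset_closure (Or.inr ⟨trackPerm ρ, fun a => rfl, rfl⟩)

lemma ps2_mem : partialShift₂ B C ∈ RGrp B C :=
  Subgroup.subset_closure (Or.inl rfl)

lemma cw_single_shift_mem (k : ℤ) (ρ : B → Equiv.Perm C) :
    cw (fun y => ρ (y k)) ∈ RGrp B C := by
  have he : partialShift₂ B C ^ k * cw (fun y : ℤ → B => ρ (y 0)) * partialShift₂ B C ^ (-k)
      = cw (fun y => ρ (y k)) := by
    rw [cw_conj]
    congr 1
    funext y
    show ρ (y (k + 0)) = ρ (y k)
    rw [add_zero]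
  rw [← he]
  exact mul_mem (mul_mem (zpow_mem ps2_mem k) (cw_single_mem ρ)) (zpow_mem ps2_mem (-k))

lemma dd_mem {H : Subgroup (Equiv.Perm C)} (hH : ⁅H, H⁆ = H) :
    ∀ (n : ℕ) (q : Fin (n + 1) → B) (v : Equiv.Perm C), v ∈ H →
      cw (dd n q v) ∈ RGrp B C := by
  intro n
  induction n with
  | zero =>
      intro q v _
      have he : dd 0 q v = fun y => (fun b => if b = q 0 then v else 1) (y 0) := by
        funext y
        simp [dd, Fin.forall_fin_one]
      rw [he]
      exact cw_single_mem (fun b => if b = q 0 then v else 1)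
  | succ n ih =>
      intro q v hv
      set Sgrp : Subgroup (Equiv.Perm C) :=
        { carrier := {v | cw (dd (n + 1) q v) ∈ RGrp B C}
          one_mem' := by
            show cw (dd (n+1) q 1) ∈ RGrp B C
            rw [dd_one, map_one]; exact one_mem _
          mul_mem' := by
            intro v w hvm hwm
            show cw (dd (n+1) q (v * w)) ∈ RGrp B C
            rw [dd_mul, map_mul]
            exact mul_mem hvm hwm
          inv_mem' := by
            intro v hvm
            show cw (dd (n+1) q v⁻¹) ∈ RGrp B C
            rw [dd_inv, map_inv]
            exact inv_mem hvm } with hS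
      suffices hHS : H ≤ Sgrp by exact hHS hv
      rw [← hH]
      rw [Subgroup.commutator_le]
      intro a ha b hb
      show cw (dd (n+1) q ⁅a, b⁆) ∈ RGrp B C
      set ρ1 : (ℤ → B) → Equiv.Perm C := dd n (fun j => q j.castSucc) a with hρ1
      set ρ2 : (ℤ → B) → Equiv.Perm C :=
        fun y => (fun b' => if b' = q (Fin.last (n + 1)) then b else 1) (y ((n : ℤ) + 1)) with hρ2
      have keyeq : dd (n + 1) q ⁅a, b⁆ = ⁅ρ1, ρ2⁆ := by
        funext y
        have hsplit : (∀ j : Fin (n + 2), y (j : ℤ) = q j) ↔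
            ((∀ j : Fin (n + 1), y (j : ℤ) = q j.castSucc) ∧
              y ((n : ℤ) + 1) = q (Fin.last (n + 1))) := by
          constructor
          · intro h
            refine ⟨fun j => ?_, ?_⟩
            · have := h (Fin.castSucc j)
              simpa using this
            · have := h (Fin.last (n + 1))
              simpa using this
          · rintro ⟨h1, h2⟩ j
            induction j using Fin.lastCases with
            | last => simpa using h2
            | cast j => have := h1 j; simpa using this
        show dd (n+1) q ⁅a, b⁆ y = ⁅ρ1 y, ρ2 y⁆
        rw [hρ1, hρ2]
        simp only [dd]
        by_cases h1 : ∀ j : Fin (n + 1), y (j : ℤ) = q j.castSucc <;>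
          by_cases h2 : y ((n : ℤ) + 1) = q (Fin.last (n + 1)) <;>
            simp [hsplit, h1, h2, commutatorElement_def]
      rw [keyeq, map_commutatorElement]
      have hX : cw ρ1 ∈ RGrp B C := ih (fun j => q j.castSucc) a ha
      have hY : cw ρ2 ∈ RGrp B C := by
        rw [hρ2]
        exact cw_single_shift_mem ((n : ℤ) + 1)
          (fun b' => if b' = q (Fin.last (n + 1)) then b else 1)
      exact mul_mem (mul_mem (mul_mem hX hY) (inv_mem hX)) (inv_mem hY)

end Stmt18aux

namespace Stmt18aux

variable {B C : Type*} {Γ : Type*} [Group Γ]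

/-- the cellwise rule reading a window pattern -/
noncomputable def rho (n : ℕ) (u : Γ →* Equiv.Perm C) (g : (Fin (n + 1) → B) → Γ) :
    (ℤ → B) → Equiv.Perm C :=
  fun y => u (g (fun j : Fin (n + 1) => y (j : ℤ)))

/-- the big pattern-wise homomorphism into the shift automorphisms -/
noncomputable def theta (n : ℕ) (u : Γ →* Equiv.Perm C) :
    ((Fin (n + 1) → B) → Γ) →* Equiv.Perm (ℤ → B × C) where
  toFun g := cw (rho n u g)
  map_one' := by
    show cw (rho n u 1) = 1
    have : rho (B := B) n u 1 = 1 := by funext y; simp [rho]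
    rw [this, map_one]
  map_mul' := fun g g' => by
    show cw (rho n u (g * g')) = cw (rho n u g) * cw (rho n u g')
    have : rho (B := B) n u (g * g') = rho n u g * rho n u g' := by
      funext y; simp [rho]
    rw [this, map_mul]

lemma theta_mem [Fintype B] {H : Subgroup (Equiv.Perm C)} (hH : ⁅H, H⁆ = H)
    (n : ℕ) (u : Γ →* Equiv.Perm C) (hu : ∀ γ, u γ ∈ H)
    (g : (Fin (n + 1) → B) → Γ) : theta n u g ∈ RGrp B C := by
  classical
  have key : ∀ s : Finset (Fin (n + 1) → B),
      cw (fun y => if (fun j : Fin (n + 1) => y (j : ℤ)) ∈ s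
        then u (g (fun j : Fin (n + 1) => y (j : ℤ))) else 1) ∈ RGrp B C := by
    intro s
    induction s using Finset.induction_on with
    | empty =>
        have : (fun y : ℤ → B => if (fun j : Fin (n + 1) => y (j : ℤ)) ∈ (∅ : Finset _)
            then u (g (fun j : Fin (n + 1) => y (j : ℤ))) else 1) = 1 := by
          funext y; simp
        rw [this, map_one]; exact one_mem _
    | @insert q s hq ih =>
        have split : (fun y : ℤ → B => if (fun j : Fin (n + 1) => y (j : ℤ)) ∈ insert q s
              then u (g (fun j : Fin (n + 1) => y (j : ℤ))) else 1)
            = dd n q (u (g q)) *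
              (fun y => if (fun j : Fin (n + 1) => y (j : ℤ)) ∈ s
                then u (g (fun j : Fin (n + 1) => y (j : ℤ))) else 1) := by
          funext y
          rw [Pi.mul_apply]
          by_cases hy : (fun j : Fin (n + 1) => y (j : ℤ)) = q
          · have hdd : dd n q (u (g q)) y = u (g q) := by
              rw [dd, if_pos]
              intro j; exact congrFun hy j
            have hins : (fun j : Fin (n + 1) => y (j : ℤ)) ∈ insert q s := by
              rw [hy]; exact Finset.mem_insert_self q s
            have hs : (fun j : Fin (n + 1) => y (j : ℤ)) ∉ s := by rw [hy]; exact hq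
            rw [if_pos hins, if_neg hs, hdd, hy, mul_one]
          · have hdd : dd n q (u (g q)) y = 1 := by
              rw [dd, if_neg]
              intro hc
              exact hy (funext hc)
            by_cases hys : (fun j : Fin (n + 1) => y (j : ℤ)) ∈ s
            · rw [if_pos (Finset.mem_insert_of_mem hys), if_pos hys, hdd, one_mul]
            · rw [if_neg ?_, if_neg hys, hdd, one_mul]
              intro hc
              rcases Finset.mem_insert.mp hc with h | h
              exacts [hy h, hys h]
        rw [split, map_mul]
        exact mul_mem (dd_mem hH n q (u (g q)) (hu (g q))) ih
  have : theta n u g = cw (fun y => if (fun j : Fin (n + 1) => y (j : ℤ)) ∈ (Finset.univ : Finset (Fin (n + 1) → B))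
      then u (g (fun j : Fin (n + 1) => y (j : ℤ))) else 1) := by
    show cw (rho n u g) = _
    congr 1
    funext y
    rw [if_pos (Finset.mem_univ _)]
    rfl
  rw [this]
  exact key Finset.univ

lemma theta_injective [Nonempty C] (n : ℕ) (u : Γ →* Equiv.Perm C)
    (hu : Function.Injective u) :
    Function.Injective (theta (B := B) n u) := by
  rw [← MonoidHom.ker_eq_bot_iff, eq_bot_iff]
  intro g hg
  rw [MonoidHom.mem_ker] at hg
  rw [Subgroup.mem_bot]
  funext q
  show g q = 1
  apply hu
  rw [map_one]
  apply Equiv.ext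
  intro c
  set yq : ℤ → B := fun j => if h : 0 ≤ j ∧ j ≤ (n : ℤ) then q ⟨j.toNat, by omega⟩ else q 0
    with hyq
  set x : ℤ → B × C := fun j => (yq j, c) with hx
  have hpat : (fun j : Fin (n + 1) => yq ((0 : ℤ) + (j : ℤ))) = q := by
    funext j
    have h1 : (0 : ℤ) + (j : ℤ) = (j : ℤ) := zero_add _
    rw [h1]
    simp only [hyq]
    have h2 : (0 : ℤ) ≤ (j : ℤ) ∧ (j : ℤ) ≤ (n : ℤ) := by
      constructor
      · exact Int.natCast_nonneg _
      · exact_mod_cast Nat.lt_succ_iff.mp j.isLt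
    rw [dif_pos h2]
    congr 1
  have hcw : cw (rho n u g) = (1 : Equiv.Perm (ℤ → B × C)) := hg
  have h0 : cw (rho n u g) x 0 = x 0 := by rw [hcw]; rfl
  rw [cw_apply] at h0
  have hsnd : rho n u g (fun jj : ℤ => (x (0 + jj)).1) ((x 0).2) = (x 0).2 :=
    congrArg Prod.snd h0
  simp only [rho] at hsnd
  have e2 : (fun j : Fin (n + 1) => (x ((0 : ℤ) + (j : ℤ))).1) = q := hpat
  rw [e2] at hsnd
  show u (g q) c = c
  exact hsnd

end Stmt18aux

namespace Stmt18aux2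

open scoped commutatorElement

abbrev G5 := alternatingGroup (Fin 5)

lemma commutator_G5 : commutator ↥G5 = ⊤ := by
  rcases (commutator ↥G5).normal_of_characteristic.eq_bot_or_eq_top with h | h
  · exfalso
    have hab : ∀ a b : ↥G5, ⁅a, b⁆ = 1 := by
      intro a b
      have : ⁅a, b⁆ ∈ commutator ↥G5 :=
        Subgroup.commutator_mem_commutator (Subgroup.mem_top a) (Subgroup.mem_top b)
      rw [h] at this
      exact this
    set σ : Equiv.Perm (Fin 5) := c[0, 1, 2] with hσ
    set τ : Equiv.Perm (Fin 5) := c[2, 3, 4] with hτ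
    have hσm : σ ∈ alternatingGroup (Fin 5) := by rw [Equiv.Perm.mem_alternatingGroup]; decide
    have hτm : τ ∈ alternatingGroup (Fin 5) := by rw [Equiv.Perm.mem_alternatingGroup]; decide
    have h0 := hab ⟨σ, hσm⟩ ⟨τ, hτm⟩
    have h2 : σ * τ * σ⁻¹ * τ⁻¹ = 1 := by
      have := congrArg Subtype.val h0
      simpa [commutatorElement_def] using this
    revert h2
    decide
  · exact h

lemma nontrivial_G5 : Nontrivial ↥G5 := by
  refine ⟨1, ⟨c[0, 1, 2], by rw [Equiv.Perm.mem_alternatingGroup]; decide⟩, ?_⟩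
  intro h
  have := congrArg (Subtype.val) h
  revert this
  decide

lemma not_solvable_G5 : ¬ IsSolvable ↥G5 := by
  rintro ⟨n, hn⟩
  have htop : ∀ m : ℕ, derivedSeries ↥G5 m = ⊤ := by
    intro m
    induction m with
    | zero => rfl
    | succ m ih => rw [derivedSeries_succ, ih, ← commutator_def, commutator_G5]
  rw [htop n] at hn
  have : Nontrivial ↥G5 := nontrivial_G5
  exact absurd hn.symm bot_ne_top

lemma normal_solvable_bot {Q : Type*} [Finite Q] (M : Subgroup (Q → ↥G5)) (hN : M.Normal)
    (hs : IsSolvable ↥M) : M = ⊥ := by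
  classical
  rw [eq_bot_iff]
  intro x hx
  rw [Subgroup.mem_bot]
  funext q
  have hsurj : Function.Surjective (Pi.evalMonoidHom (fun _ : Q => ↥G5) q) := by
    intro g
    exact ⟨Pi.mulSingle q g, by simp⟩
  set Mq := M.map (Pi.evalMonoidHom (fun _ : Q => ↥G5) q) with hMq
  haveI : Mq.Normal := hN.map _ hsurj
  have hMqs : IsSolvable ↥Mq := by
    have hr : ((Pi.evalMonoidHom (fun _ : Q => ↥G5) q).comp M.subtype).range = Mq := by
      rw [MonoidHom.range_comp, Subgroup.range_subtype]
    have : Function.Surjective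
        (((Pi.evalMonoidHom (fun _ : Q => ↥G5) q).comp M.subtype).rangeRestrict) :=
      MonoidHom.rangeRestrict_surjective _
    haveI hsM : Group.IsSolvable ↥M := hs
    have := solvable_of_surjective this
    rw [hr] at this -- type issue?
    exact this
  rcases (inferInstance : IsSimpleGroup ↥G5).eq_bot_or_eq_top_of_normal Mq ‹Mq.Normal› with h | h
  · have : x q ∈ Mq := ⟨x, hx, rfl⟩
    rw [h, Subgroup.mem_bot] at this
    exact this
  · exfalso
    apply not_solvable_G5
    rw [h] at hMqs
    haveI : Group.IsSolvable ↥(⊤ : Subgroup ↥G5) := hMqs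
    exact solvable_of_solvable_injective
      (f := (Subgroup.topEquiv (G := ↥G5)).symm.toMonoidHom)
      (MulEquiv.injective _)
end Stmt18aux2

namespace Stmt18aux

open Stmt18aux2

theorem part2 {B C : Type} [Fintype B] [Fintype C]
    (hB : 2 ≤ Fintype.card B) (hC : 5 ≤ Fintype.card C)
    (K : Subgroup ↥(RGrp B C)) (hK : K.index ≠ 0) : ¬ IsSolvable ↥K := by
  intro hsolv
  classical
  obtain ⟨emb⟩ : Nonempty (Fin 5 ↪ C) :=
    Function.Embedding.nonempty_iff_card_le.mpr (by simpa using hC)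
  haveI : Nonempty C := ⟨emb 0⟩
  set u : ↥G5 →* Equiv.Perm C :=
    (Equiv.Perm.viaEmbeddingHom emb).comp (alternatingGroup (Fin 5)).subtype with hudef
  have hu_inj : Function.Injective u :=
    (Equiv.Perm.viaEmbeddingHom_injective emb).comp (Subgroup.subtype_injective _)
  have hH : ⁅u.range, u.range⁆ = u.range := by
    rw [MonoidHom.range_eq_map, ← Subgroup.map_commutator, ← commutator_def, commutator_G5]
  have hu_mem : ∀ γ, u γ ∈ u.range := fun γ => ⟨γ, rfl⟩
  set m := K.index with hm
  set n := m.factorial with hn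
  have hmem : ∀ g : (Fin (n + 1) → B) → ↥G5, theta (B := B) n u g ∈ RGrp B C :=
    fun g => theta_mem hH n u hu_mem g
  set Θ : ((Fin (n + 1) → B) → ↥G5) →* ↥(RGrp B C) :=
    (theta (B := B) n u).codRestrict (RGrp B C) hmem with hΘdef
  have hΘinj : Function.Injective Θ := by
    intro g g' h
    exact theta_injective n u hu_inj (congrArg Subtype.val h)
  set f : ↥(RGrp B C) →* Equiv.Perm (↥(RGrp B C) ⧸ K) :=
    MulAction.toPermHom _ _ with hfdef
  set g : ((Fin (n + 1) → B) → ↥G5) →* Equiv.Perm (↥(RGrp B C) ⧸ K) := f.comp Θ with hgdef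
  have hkerK : ∀ x, x ∈ g.ker → Θ x ∈ K := by
    intro x hx
    have : Θ x ∈ f.ker := hx
    rw [← Subgroup.normalCore_eq_ker] at this
    exact K.normalCore_le this
  have hsolv_ker : IsSolvable ↥g.ker := by
    have hinj : Function.Injective
        ((Θ.comp g.ker.subtype).codRestrict K (fun x => hkerK x.1 x.2)) := by
      intro x y hxy
      apply Subtype.ext
      apply hΘinj
      exact congrArg Subtype.val hxy
    haveI : Group.IsSolvable ↥K := hsolv
    exact solvable_of_solvable_injective hinj
  have hbot : g.ker = ⊥ := normal_solvable_bot g.ker (MonoidHom.normal_ker g) hsolv_ker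
  have hginj : Function.Injective g := (MonoidHom.ker_eq_bot_iff g).mp hbot
  haveI hfin : Finite (↥(RGrp B C) ⧸ K) := by
    apply Nat.finite_of_card_ne_zero
    rwa [← Subgroup.index_eq_card]
  have hcard := Nat.card_le_card_of_injective g hginj
  -- compute cards
  have hPerm : Nat.card (Equiv.Perm (↥(RGrp B C) ⧸ K)) = m.factorial := by
    haveI := Fintype.ofFinite (↥(RGrp B C) ⧸ K)
    rw [Nat.card_eq_fintype_card, Fintype.card_perm, ← Nat.card_eq_fintype_card,
      ← Subgroup.index_eq_card]
  have hQ : (n : ℕ) < Nat.card (Fin (n + 1) → B) := by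
    rw [Nat.card_fun, Nat.card_eq_fintype_card (α := B), Nat.card_eq_fintype_card (α := Fin (n+1)),
      Fintype.card_fin]
    calc n < 2 ^ (n + 1) := by
          have := (Nat.lt_two_pow_self (n := n))
          have h2 : (2:ℕ) ^ n ≤ 2 ^ (n + 1) := Nat.pow_le_pow_right (by norm_num) (by omega)
          omega
      _ ≤ Fintype.card B ^ (n + 1) := Nat.pow_le_pow_left hB _
  have hG5 : 2 ≤ Nat.card ↥G5 := by
    haveI : Finite ↥G5 := inferInstance
    haveI := Fintype.ofFinite ↥G5
    rw [Nat.card_eq_fintype_card]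
    exact Fintype.one_lt_card_iff_nontrivial.mpr nontrivial_G5
  have hP : 2 ^ Nat.card (Fin (n + 1) → B) ≤ Nat.card ((Fin (n + 1) → B) → ↥G5) := by
    have e : Nat.card ((Fin (n + 1) → B) → ↥G5)
        = Nat.card ↥G5 ^ Nat.card (Fin (n + 1) → B) := Nat.card_fun
    rw [e]
    exact Nat.pow_le_pow_left hG5 _
  have hfact : m.factorial < 2 ^ Nat.card (Fin (n + 1) → B) := by
    calc m.factorial = n := hn.symm
      _ < 2 ^ n := (Nat.lt_two_pow_self (n := n))
      _ ≤ 2 ^ Nat.card (Fin (n + 1) → B) := Nat.pow_le_pow_right (by norm_num) (le_of_lt hQ)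
  rw [hPerm] at hcard
  omega

end Stmt18aux

/-- for `|B| ≥ 2` and `|C| ≥ 5`, `R[B;C]` fails the Tits alternative: it contains
no free group of rank two, and it has no solvable subgroup of finite index. -/

theorem stmt18 (B C : Type) [Fintype B] [Fintype C]
    (hB : 2 ≤ Fintype.card B) (hC : 5 ≤ Fintype.card C) :
    (¬ ∃ φ : FreeGroup (Fin 2) →* ↥(RGrp B C), Function.Injective φ) ∧
    (∀ K : Subgroup ↥(RGrp B C), K.index ≠ 0 → ¬ IsSolvable ↥K) := by
  constructor
  · exact Stmt18aux.part1 hB hC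
  · intro K hK
    exact Stmt18aux.part2 hB hC K hK
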